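/- Every LC-loop satisfies the identity C14: if a loop satisfies (x·x)·(y·z) = (x·(x·y))·z for all x,y,z, then it satisfies x·(y·(y·z)) = (x·(y·y))·z for all x,y,z. -/
import Mathlib


/-- A loop: a set with multiplication, left division `ldiv` (written `\`),
right division `rdiv` (written `/`), and a two-sided identity `e`. -/
structure Loop (α : Type) where
  mul : α → α → α
  ldiv : α → α → α
  rdiv : α → α → α
  e : α
  mul_ldiv : ∀ a b, mul a (ldiv a b) = b
  rdiv_mul : ∀ a b, mul (rdiv b a) a = b
  ldiv_mul : ∀ a b, ldiv a (mul a b) = b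
  mul_rdiv : ∀ a b, rdiv (mul b a) a = b
  e_mul : ∀ a, mul e a = a
  mul_e : ∀ a, mul a e = a

theorem stmt_9 (α : Type) (L : Loop α) (h : ∀ x y z : α, L.mul (L.mul x x) (L.mul y z) = L.mul (L.mul x (L.mul x y)) z) :
    ∀ x y z : α, L.mul x (L.mul y (L.mul y z)) = L.mul (L.mul x (L.mul y y)) z := by
  -- left alternativity
  have la : ∀ x y : α, L.mul x (L.mul x y) = L.mul (L.mul x x) y := by
    intro x y
    have := h x y L.e
    rw [L.mul_e, L.mul_e] at this
    exact this.symm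
  -- squares are left nuclear
  have nuc : ∀ x u v : α, L.mul (L.mul x x) (L.mul u v) = L.mul (L.mul (L.mul x x) u) v := by
    intro x u v
    rw [h, la]
  -- LIP
  have lip : ∀ x v : α, L.mul x (L.mul (L.ldiv x L.e) v) = v := by
    intro x v
    have h1 : L.mul (L.mul x x) (L.mul (L.ldiv x L.e) v) = L.mul x v := by
      rw [h, L.mul_ldiv, L.mul_e]
    rw [← la] at h1
    have := congrArg (L.ldiv x) h1
    rwa [L.ldiv_mul, L.ldiv_mul] at this
  intro x y z
  -- key identity (14a): s·(y²·(s·w)) = (s·(y²·s))·w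
  have k14 : ∀ s w : α, L.mul s (L.mul (L.mul y y) (L.mul s w)) =
      L.mul (L.mul s (L.mul (L.mul y y) s)) w := by
    intro s w
    have e1 := la (L.mul (L.mul y y) s) w
    -- e1 : q(qw) = (qq)w with q = y²s
    rw [← nuc y s w] at e1  -- LHS inner qw = y²(sw)
    rw [← nuc y s (L.mul (L.mul y y) (L.mul s w))] at e1  -- LHS outer
    -- RHS: qq = y²(s(y²s)), then (y²m)w = y²(mw)
    rw [← nuc y s (L.mul (L.mul y y) s)] at e1
    rw [← nuc y (L.mul s (L.mul (L.mul y y) s)) w] at e1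
    have := congrArg (L.ldiv (L.mul y y)) e1
    rwa [L.ldiv_mul, L.ldiv_mul] at this
  -- (19): x(y²v) = (x(y²x))·((x\e)v)
  have l19 : ∀ v : α, L.mul x (L.mul (L.mul y y) v) =
      L.mul (L.mul x (L.mul (L.mul y y) x)) (L.mul (L.ldiv x L.e) v) := by
    intro v
    have := k14 x (L.mul (L.ldiv x L.e) v)
    rwa [lip x v] at this
  -- (21): x·y² = n·(x\e), n = x(y²x)
  have l21 : L.mul x (L.mul y y) =
      L.mul (L.mul x (L.mul (L.mul y y) x)) (L.ldiv x L.e) := by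
    have := l19 L.e
    rwa [L.mul_e, L.mul_e] at this
  -- n is left nuclear
  have nucn : ∀ u v : α, L.mul (L.mul x (L.mul (L.mul y y) x)) (L.mul u v) =
      L.mul (L.mul (L.mul x (L.mul (L.mul y y) x)) u) v := by
    intro u v
    -- q := y²·x, then q·q = y²·n and use nuclearity of q·q
    have hq : L.mul (L.mul (L.mul y y) x) (L.mul (L.mul y y) x) =
        L.mul (L.mul y y) (L.mul x (L.mul (L.mul y y) x)) := by
      rw [← nuc y x (L.mul (L.mul y y) x)]
    have h1 := nuc (L.mul (L.mul y y) x) u v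
    -- (qq)(uv) = ((qq)u)v ; rewrite qq = y²·n on both sides
    rw [hq] at h1
    -- now: (y²·n)(uv) = ((y²·n)u)v
    rw [← nuc y (L.mul x (L.mul (L.mul y y) x)) (L.mul u v)] at h1
    rw [← nuc y (L.mul x (L.mul (L.mul y y) x)) u] at h1
    rw [← nuc y (L.mul (L.mul x (L.mul (L.mul y y) x)) u) v] at h1
    have := congrArg (L.ldiv (L.mul y y)) h1
    rwa [L.ldiv_mul, L.ldiv_mul] at this
  -- finish
  rw [la y z, l21, ← nucn (L.ldiv x L.e) z]
  exact l19 z
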